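/- Let A ≥ 0 be a real number, U(x) = 0 if x ≤ A and U(x) = 1 if x > A, and V(x) = x·1{x ≥ ⌊A⌋ + 2}. Let X_1, X_2 be independent Poisson random variables with means λ_1, λ_2 > 0, and S = U(X_1)λ_1 + U(X_2)λ_2. Suppose δ* : ℕ² → ℝ satisfies E_{λ_1,λ_2}[(δ*(X_1, X_2) − S)²] ≤ E_{λ_1,λ_2}[(V(X_1) + V(X_2) − S)²] for all λ_1, λ_2 > 0. Then in the limit λ_2 → 0 one obtains, for every λ_1 > 0, the one-dimensional risk inequality E_{λ_1}[(δ*(X_1, 0) − U(X_1)λ_1)²] ≤ E_{λ_1}[(V(X_1) − U(X_1)λ_1)²]. -/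

import Mathlib

/-- Poisson probability mass function with mean `λ`. -/
noncomputable def poissonPmf (l : ℝ) (x : ℕ) : ℝ :=
  Real.exp (-l) * l ^ x / (Nat.factorial x : ℝ)

/-- Squared error risk, in the two-sample problem, of the estimator `δ` of
`S = U(X₁)λ₁ + U(X₂)λ₂` (with `U(x) = 1{x > A}`) when `X₁, X₂` are
independent Poisson with means `λ₁, λ₂`. -/
noncomputable def sqRisk2 (A l₁ l₂ : ℝ) (δ : ℕ × ℕ → ℝ) : ENNReal :=
  ∑' p : ℕ × ℕ,
    ENNReal.ofReal
      ((δ p - ((if A < (p.1 : ℝ) then (1 : ℝ) else 0) * l₁ +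
          (if A < (p.2 : ℝ) then (1 : ℝ) else 0) * l₂)) ^ 2 *
        (poissonPmf l₁ p.1 * poissonPmf l₂ p.2))

/-- Squared error risk of the estimator `δ` of `U(X₁)λ₁` with `U(x) = 1{x > A}`
and `X₁` Poisson with mean `λ₁`. -/
noncomputable def sqRisk1 (A l₁ : ℝ) (δ : ℕ → ℝ) : ENNReal :=
  ∑' x : ℕ,
    ENNReal.ofReal ((δ x - (if A < (x : ℝ) then (1 : ℝ) else 0) * l₁) ^ 2 * poissonPmf l₁ x)

lemma poissonPmf_nonneg {l : ℝ} (hl : 0 ≤ l) (x : ℕ) : 0 ≤ poissonPmf l x := by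
  unfold poissonPmf; positivity

lemma poissonPmf_le {l : ℝ} (hl : 0 ≤ l) (x : ℕ) :
    poissonPmf l x ≤ l ^ x / (Nat.factorial x : ℝ) := by
  unfold poissonPmf
  gcongr
  nlinarith [Real.exp_le_one_iff.2 (neg_nonpos.2 hl), (Real.exp_pos (-l)).le, pow_nonneg hl x]

lemma tsum_ofReal_exp {l : ℝ} (hl : 0 ≤ l) :
    ∑' x : ℕ, ENNReal.ofReal (l ^ x / (Nat.factorial x : ℝ)) = ENNReal.ofReal (Real.exp l) := by
  rw [show Real.exp l = ∑' n : ℕ, l ^ n / (Nat.factorial n : ℝ) by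
    rw [Real.exp_eq_exp_ℝ, NormedSpace.exp_eq_tsum_div]]
  rw [ENNReal.ofReal_tsum_of_nonneg (fun n => by positivity) (Real.summable_pow_div_factorial l)]

lemma tsum_ofReal_poissonPmf_le_one {l : ℝ} (hl : 0 ≤ l) :
    ∑' x : ℕ, ENNReal.ofReal (poissonPmf l x) ≤ 1 := by
  calc ∑' x : ℕ, ENNReal.ofReal (poissonPmf l x)
      ≤ ∑' x : ℕ, ENNReal.ofReal (Real.exp (-l)) * ENNReal.ofReal (l ^ x / (Nat.factorial x : ℝ)) := by
        refine ENNReal.tsum_le_tsum fun x => ?_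
        rw [← ENNReal.ofReal_mul (Real.exp_pos (-l)).le]
        exact ENNReal.ofReal_le_ofReal (by unfold poissonPmf; rw [mul_div_assoc])
    _ = ENNReal.ofReal (Real.exp (-l)) * ENNReal.ofReal (Real.exp l) := by
        rw [ENNReal.tsum_mul_left, tsum_ofReal_exp hl]
    _ = 1 := by
        rw [← ENNReal.ofReal_mul (Real.exp_pos (-l)).le, ← Real.exp_add, neg_add_cancel,
          Real.exp_zero, ENNReal.ofReal_one]

lemma tsum_tail_exp {l : ℝ} (hl : 0 ≤ l) :
    ∑' x : ℕ, ENNReal.ofReal (l ^ (x + 1) / (Nat.factorial (x + 1) : ℝ)) ≤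
      ENNReal.ofReal (l * Real.exp l) := by
  calc ∑' x : ℕ, ENNReal.ofReal (l ^ (x + 1) / (Nat.factorial (x + 1) : ℝ))
      ≤ ∑' x : ℕ, ENNReal.ofReal l * ENNReal.ofReal (l ^ x / (Nat.factorial x : ℝ)) := by
        refine ENNReal.tsum_le_tsum fun x => ?_
        rw [← ENNReal.ofReal_mul hl]
        refine ENNReal.ofReal_le_ofReal ?_
        rw [Nat.factorial_succ, pow_succ, mul_comm (l ^ x) l, ← mul_div_assoc]
        push_cast
        have h1 : (0:ℝ) < (Nat.factorial x : ℝ) := by positivity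
        have h0 : (0:ℝ) ≤ (x:ℝ) := Nat.cast_nonneg x
        have h2 : (Nat.factorial x : ℝ) ≤ ((x:ℝ) + 1) * (Nat.factorial x : ℝ) := by nlinarith
        gcongr
    _ = ENNReal.ofReal l * ENNReal.ofReal (Real.exp l) := by
        rw [ENNReal.tsum_mul_left, tsum_ofReal_exp hl]
    _ = ENNReal.ofReal (l * Real.exp l) := (ENNReal.ofReal_mul hl).symm

lemma sq_le_four_pow (n : ℕ) : ((n:ℝ))^2 ≤ 4 ^ n := by
  have h : (n:ℝ) ≤ 2 ^ n := by exact_mod_cast (Nat.lt_two_pow_self (n := n)).le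
  calc ((n:ℝ))^2 ≤ ((2:ℝ)^n)^2 := by nlinarith [Nat.cast_nonneg (α := ℝ) n]
    _ = 4 ^ n := by rw [← pow_mul, mul_comm, pow_mul]; norm_num

lemma tsum_tail_mass {l : ℝ} (hl : 0 ≤ l) :
    ∑' x : ℕ, ENNReal.ofReal (poissonPmf l (x + 1)) ≤ ENNReal.ofReal (l * Real.exp l) :=
  le_trans (ENNReal.tsum_le_tsum fun x => ENNReal.ofReal_le_ofReal (poissonPmf_le hl (x + 1)))
    (tsum_tail_exp hl)

lemma tsum_tail_sq {l : ℝ} (hl : 0 ≤ l) :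
    ∑' x : ℕ, ENNReal.ofReal ((((x:ℝ) + 1)) ^ 2 * poissonPmf l (x + 1)) ≤
      ENNReal.ofReal (4 * l * Real.exp (4 * l)) := by
  have step : ∀ x : ℕ, ((x:ℝ) + 1) ^ 2 * poissonPmf l (x + 1) ≤
      (4 * l) ^ (x + 1) / (Nat.factorial (x + 1) : ℝ) := by
    intro x
    have h1 : ((x:ℝ) + 1) ^ 2 ≤ 4 ^ (x + 1) := by
      have := sq_le_four_pow (x + 1); push_cast at this; exact this
    have h2 := poissonPmf_le hl (x + 1)
    have h3 := poissonPmf_nonneg hl (x + 1)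
    calc ((x:ℝ) + 1) ^ 2 * poissonPmf l (x + 1)
        ≤ (4:ℝ) ^ (x + 1) * (l ^ (x + 1) / (Nat.factorial (x + 1) : ℝ)) := by
          apply mul_le_mul h1 h2 h3 (by positivity)
      _ = (4 * l) ^ (x + 1) / (Nat.factorial (x + 1) : ℝ) := by
          rw [mul_pow, mul_div_assoc]
  exact le_trans (ENNReal.tsum_le_tsum fun x => ENNReal.ofReal_le_ofReal (step x))
    (tsum_tail_exp (by positivity))

lemma sqRisk1_ne_top {A l₁ : ℝ} (hl : 0 ≤ l₁) (V : ℕ → ℝ)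
    (hVb : ∀ x, 0 ≤ V x ∧ V x ≤ x) : sqRisk1 A l₁ V ≠ ⊤ := by
  have key : ∀ x : ℕ, ENNReal.ofReal
      ((V x - (if A < (x : ℝ) then (1 : ℝ) else 0) * l₁) ^ 2 * poissonPmf l₁ x) ≤
      ENNReal.ofReal 2 * ENNReal.ofReal ((4 * l₁) ^ x / (Nat.factorial x : ℝ)) +
      ENNReal.ofReal (2 * l₁ ^ 2) * ENNReal.ofReal (l₁ ^ x / (Nat.factorial x : ℝ)) := by
    intro x
    rw [← ENNReal.ofReal_mul (by norm_num), ← ENNReal.ofReal_mul (by positivity),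
      ← ENNReal.ofReal_add (by positivity) (by positivity)]
    refine ENNReal.ofReal_le_ofReal ?_
    have hu : (0:ℝ) ≤ (if A < (x : ℝ) then (1 : ℝ) else 0) ∧
        (if A < (x : ℝ) then (1 : ℝ) else 0) ≤ 1 := by split <;> norm_num
    have hVx := hVb x
    have h4 := sq_le_four_pow x
    have h2 := poissonPmf_le hl x
    have h3 := poissonPmf_nonneg hl x
    have h5 : (V x) ^ 2 ≤ ((x:ℝ)) ^ 2 := by nlinarith [hVx.1, hVx.2]
    have h6 : ((if A < (x : ℝ) then (1 : ℝ) else 0) * l₁) ^ 2 ≤ l₁ ^ 2 := by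
      split_ifs <;> nlinarith [sq_nonneg l₁]
    have hb : (V x - (if A < (x : ℝ) then (1 : ℝ) else 0) * l₁) ^ 2 ≤ 2 * (4:ℝ) ^ x + 2 * l₁ ^ 2 := by
      nlinarith [sq_nonneg (V x + (if A < (x : ℝ) then (1 : ℝ) else 0) * l₁), h4, h5, h6]
    calc (V x - (if A < (x : ℝ) then (1 : ℝ) else 0) * l₁) ^ 2 * poissonPmf l₁ x
        ≤ (2 * (4:ℝ) ^ x + 2 * l₁ ^ 2) * (l₁ ^ x / (Nat.factorial x : ℝ)) := by
          apply mul_le_mul hb h2 h3 (by positivity)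
      _ = 2 * ((4 * l₁) ^ x / (Nat.factorial x : ℝ)) +
          2 * l₁ ^ 2 * (l₁ ^ x / (Nat.factorial x : ℝ)) := by
          rw [mul_pow]; ring
  have hle : sqRisk1 A l₁ V ≤
      ENNReal.ofReal 2 * ENNReal.ofReal (Real.exp (4 * l₁)) +
      ENNReal.ofReal (2 * l₁ ^ 2) * ENNReal.ofReal (Real.exp l₁) := by
    calc sqRisk1 A l₁ V ≤ _ := ENNReal.tsum_le_tsum key
      _ = _ := by
        rw [ENNReal.tsum_add, ENNReal.tsum_mul_left, ENNReal.tsum_mul_left,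
          tsum_ofReal_exp (by positivity), tsum_ofReal_exp hl]
  exact (lt_of_le_of_lt hle (by finiteness)).ne

set_option maxHeartbeats 1600000 in
/-- Step in the proof of Theorem 3.1 (`n = 2`): if `δ*` dominates
`V(X₁) + V(X₂)` (with `V(x) = x·1{x ≥ ⌊A⌋ + 2}`) in two-dimensional risk for
all `λ₁, λ₂ > 0`, then letting `λ₂ → 0` yields, for every `λ₁ > 0`, the
one-dimensional risk inequality for `δ*(·, 0)` against `V`. -/
theorem poisson_two_dim_to_one_dim (A : ℝ) (hA : 0 ≤ A)
    (V : ℕ → ℝ) (hV : ∀ x, V x = if Nat.floor A + 2 ≤ x then (x : ℝ) else 0)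
    (δstar : ℕ × ℕ → ℝ)
    (hdom : ∀ l₁ l₂ : ℝ, 0 < l₁ → 0 < l₂ →
      sqRisk2 A l₁ l₂ δstar ≤ sqRisk2 A l₁ l₂ (fun p => V p.1 + V p.2)) :
    ∀ l₁ : ℝ, 0 < l₁ →
      sqRisk1 A l₁ (fun x => δstar (x, 0)) ≤ sqRisk1 A l₁ V := by
  intro l₁ hl₁
  have hl₁' : (0:ℝ) ≤ l₁ := hl₁.le
  have hU0 : (if A < (((0:ℕ)):ℝ) then (1:ℝ) else 0) = 0 := by
    rw [if_neg]; push_cast; exact not_lt.2 hA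
  have hV0 : V 0 = 0 := by rw [hV]; simp
  have hVb : ∀ x, 0 ≤ V x ∧ V x ≤ x := by
    intro x; rw [hV]; split <;> simp
  have hp0 : ∀ l : ℝ, poissonPmf l 0 = Real.exp (-l) := by
    intro l; unfold poissonPmf; simp
  set R₀ := sqRisk1 A l₁ (fun x => δstar (x, 0)) with hR₀def
  set R₁ := sqRisk1 A l₁ V with hR₁def
  have hR₁top : R₁ ≠ ⊤ := sqRisk1_ne_top hl₁' V hVb
  set K : ENNReal := R₁ * ENNReal.ofReal (2 * Real.exp 4) + ENNReal.ofReal (8 * Real.exp 4)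
    with hKdef
  have hKtop : K ≠ ⊤ :=
    ENNReal.add_ne_top.2 ⟨ENNReal.mul_ne_top hR₁top ENNReal.ofReal_ne_top,
      ENNReal.ofReal_ne_top⟩
  have key : ∀ l₂ : ℝ, 0 < l₂ → l₂ ≤ 1 →
      ENNReal.ofReal (Real.exp (-l₂)) * R₀ ≤ R₁ + ENNReal.ofReal l₂ * K := by
    intro l₂ h0 h1
    have hl₂' : (0:ℝ) ≤ l₂ := h0.le
    -- Step 1 : lower bound for the risk of δstar
    have step1 : ENNReal.ofReal (Real.exp (-l₂)) * R₀ ≤ sqRisk2 A l₁ l₂ δstar := by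
      have heq : ENNReal.ofReal (Real.exp (-l₂)) * R₀ =
          ∑' x : ℕ, ENNReal.ofReal
            ((δstar (x, 0) - ((if A < ((x,(0:ℕ)).1 : ℝ) then (1 : ℝ) else 0) * l₁ +
              (if A < (((x,(0:ℕ)).2 : ℕ) : ℝ) then (1 : ℝ) else 0) * l₂)) ^ 2 *
              (poissonPmf l₁ x * poissonPmf l₂ 0)) := by
        rw [hR₀def, sqRisk1, ← ENNReal.tsum_mul_left]
        congr 1; funext x
        rw [← ENNReal.ofReal_mul (Real.exp_pos _).le]
        congr 1
        simp only []
        rw [hU0, zero_mul, add_zero, hp0]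
        ring
      calc ENNReal.ofReal (Real.exp (-l₂)) * R₀ = _ := heq
        _ ≤ sqRisk2 A l₁ l₂ δstar := by
            exact ENNReal.tsum_comp_le_tsum_of_injective
              (f := fun x : ℕ => ((x, 0) : ℕ × ℕ))
              (fun a b h => by simpa using h) _
    -- Step 3 : upper bound for the risk of V
    have step3 : sqRisk2 A l₁ l₂ (fun p => V p.1 + V p.2) ≤ R₁ + ENNReal.ofReal l₂ * K := by
      set F : ℕ → ℕ → ENNReal := fun x y => ENNReal.ofReal
        ((V x + V y - ((if A < (x : ℝ) then (1 : ℝ) else 0) * l₁ +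
          (if A < (y : ℝ) then (1 : ℝ) else 0) * l₂)) ^ 2 *
          (poissonPmf l₁ x * poissonPmf l₂ y)) with hFdef
      have hsplit : sqRisk2 A l₁ l₂ (fun p => V p.1 + V p.2) =
          (∑' x : ℕ, F x 0) + ∑' x : ℕ, ∑' y : ℕ, F x (y + 1) := by
        calc sqRisk2 A l₁ l₂ (fun p => V p.1 + V p.2) = ∑' p : ℕ × ℕ, F p.1 p.2 := rfl
          _ = ∑' x : ℕ, ∑' y : ℕ, F x y := ENNReal.tsum_prod
          _ = ∑' x : ℕ, (F x 0 + ∑' y : ℕ, F x (y + 1)) := by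
              refine tsum_congr fun x => ?_
              exact tsum_eq_zero_add' ENNReal.summable
          _ = (∑' x : ℕ, F x 0) + ∑' x : ℕ, ∑' y : ℕ, F x (y + 1) := ENNReal.tsum_add
      have hA1 : (∑' x : ℕ, F x 0) ≤ R₁ := by
        refine ENNReal.tsum_le_tsum fun x => ?_
        rw [hFdef]
        refine ENNReal.ofReal_le_ofReal ?_
        rw [hV0, hU0, hp0, add_zero, zero_mul, add_zero]
        have h3 := poissonPmf_nonneg hl₁' x
        have he1 : Real.exp (-l₂) ≤ 1 := Real.exp_le_one_iff.2 (by linarith)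
        have he0 : (0:ℝ) ≤ Real.exp (-l₂) := (Real.exp_pos _).le
        nlinarith [sq_nonneg (V x - (if A < (x:ℝ) then (1:ℝ) else 0) * l₁),
          mul_nonneg (sq_nonneg (V x - (if A < (x:ℝ) then (1:ℝ) else 0) * l₁)) h3]
      have hB : ∀ x : ℕ, (∑' y : ℕ, F x (y + 1)) ≤
          ENNReal.ofReal ((V x - (if A < (x:ℝ) then (1:ℝ) else 0) * l₁) ^ 2 * poissonPmf l₁ x) *
            (ENNReal.ofReal l₂ * ENNReal.ofReal (2 * Real.exp 4)) +
          ENNReal.ofReal (poissonPmf l₁ x) *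
            (ENNReal.ofReal l₂ * ENNReal.ofReal (8 * Real.exp 4)) := by
        intro x
        set a : ℝ := V x - (if A < (x:ℝ) then (1:ℝ) else 0) * l₁ with hadef
        have hpx := poissonPmf_nonneg hl₁' x
        have hterm : ∀ y : ℕ, F x (y + 1) ≤
            ENNReal.ofReal (2 * (a ^ 2 * poissonPmf l₁ x)) *
              ENNReal.ofReal (poissonPmf l₂ (y + 1)) +
            ENNReal.ofReal (2 * poissonPmf l₁ x) *
              ENNReal.ofReal (((y:ℝ) + 1) ^ 2 * poissonPmf l₂ (y + 1)) := by
          intro y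
          have hpy := poissonPmf_nonneg hl₂' (y + 1)
          rw [hFdef, ← ENNReal.ofReal_mul (by positivity),
            ← ENNReal.ofReal_mul (by positivity),
            ← ENNReal.ofReal_add (by positivity) (by positivity)]
          refine ENNReal.ofReal_le_ofReal ?_
          have hb1 : (0:ℝ) ≤ V (y + 1) ∧ V (y + 1) ≤ ((y:ℕ) + 1 : ℕ) := hVb (y + 1)
          have hb1' : V (y + 1) ≤ (y:ℝ) + 1 := by
            have := hb1.2; push_cast at this; exact this
          have hu : (0:ℝ) ≤ (if A < ((y + 1 : ℕ):ℝ) then (1:ℝ) else 0) ∧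
              (if A < ((y + 1 : ℕ):ℝ) then (1:ℝ) else 0) ≤ 1 := by split <;> norm_num
          set b : ℝ := V (y + 1) - (if A < ((y + 1 : ℕ):ℝ) then (1:ℝ) else 0) * l₂ with hbdef
          have hbb : b ^ 2 ≤ ((y:ℝ) + 1) ^ 2 := by
            have hy1 : (0:ℝ) ≤ (y:ℝ) + 1 := by positivity
            have hl2b : (if A < ((y + 1 : ℕ):ℝ) then (1:ℝ) else 0) * l₂ ≤ (y:ℝ) + 1 := by
              have hyc : (1:ℝ) ≤ (y:ℝ) + 1 := by
                have : (0:ℝ) ≤ (y:ℝ) := Nat.cast_nonneg y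
                linarith
              split_ifs <;> nlinarith
            have hl2b0 : (0:ℝ) ≤ (if A < ((y + 1 : ℕ):ℝ) then (1:ℝ) else 0) * l₂ := by
              split_ifs <;> nlinarith
            nlinarith [hb1.1, hb1']
          have hsq : (V x + V (y + 1) -
              ((if A < (x:ℝ) then (1:ℝ) else 0) * l₁ +
                (if A < ((y + 1 : ℕ):ℝ) then (1:ℝ) else 0) * l₂)) ^ 2 ≤
              2 * a ^ 2 + 2 * ((y:ℝ) + 1) ^ 2 := by
            have hid : V x + V (y + 1) -
                ((if A < (x:ℝ) then (1:ℝ) else 0) * l₁ +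
                  (if A < ((y + 1 : ℕ):ℝ) then (1:ℝ) else 0) * l₂) = a + b := by
              rw [hadef, hbdef]; ring
            rw [hid]
            nlinarith [sq_nonneg (a - b), hbb]
          have hm : (0:ℝ) ≤ poissonPmf l₁ x * poissonPmf l₂ (y + 1) := mul_nonneg hpx hpy
          calc (V x + V (y + 1) -
              ((if A < (x:ℝ) then (1:ℝ) else 0) * l₁ +
                (if A < ((y + 1 : ℕ):ℝ) then (1:ℝ) else 0) * l₂)) ^ 2 *
                (poissonPmf l₁ x * poissonPmf l₂ (y + 1))
              ≤ (2 * a ^ 2 + 2 * ((y:ℝ) + 1) ^ 2) *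
                (poissonPmf l₁ x * poissonPmf l₂ (y + 1)) := by
                exact mul_le_mul_of_nonneg_right hsq hm
            _ = 2 * (a ^ 2 * poissonPmf l₁ x) * poissonPmf l₂ (y + 1) +
                2 * poissonPmf l₁ x * (((y:ℝ) + 1) ^ 2 * poissonPmf l₂ (y + 1)) := by ring
        calc (∑' y : ℕ, F x (y + 1))
            ≤ ∑' y : ℕ, (ENNReal.ofReal (2 * (a ^ 2 * poissonPmf l₁ x)) *
                ENNReal.ofReal (poissonPmf l₂ (y + 1)) +
              ENNReal.ofReal (2 * poissonPmf l₁ x) *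
                ENNReal.ofReal (((y:ℝ) + 1) ^ 2 * poissonPmf l₂ (y + 1))) :=
              ENNReal.tsum_le_tsum hterm
          _ = ENNReal.ofReal (2 * (a ^ 2 * poissonPmf l₁ x)) *
                (∑' y : ℕ, ENNReal.ofReal (poissonPmf l₂ (y + 1))) +
              ENNReal.ofReal (2 * poissonPmf l₁ x) *
                (∑' y : ℕ, ENNReal.ofReal (((y:ℝ) + 1) ^ 2 * poissonPmf l₂ (y + 1))) := by
              rw [ENNReal.tsum_add, ENNReal.tsum_mul_left, ENNReal.tsum_mul_left]
          _ ≤ ENNReal.ofReal (2 * (a ^ 2 * poissonPmf l₁ x)) *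
                ENNReal.ofReal (l₂ * Real.exp l₂) +
              ENNReal.ofReal (2 * poissonPmf l₁ x) *
                ENNReal.ofReal (4 * l₂ * Real.exp (4 * l₂)) := by
              gcongr
              · exact tsum_tail_mass hl₂'
              · exact tsum_tail_sq hl₂'
          _ ≤ ENNReal.ofReal (a ^ 2 * poissonPmf l₁ x) *
                (ENNReal.ofReal l₂ * ENNReal.ofReal (2 * Real.exp 4)) +
              ENNReal.ofReal (poissonPmf l₁ x) *
                (ENNReal.ofReal l₂ * ENNReal.ofReal (8 * Real.exp 4)) := by
              have hsa : (0:ℝ) ≤ a ^ 2 * poissonPmf l₁ x := by positivity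
              have he4 : Real.exp l₂ ≤ Real.exp 4 := Real.exp_le_exp.2 (by linarith)
              have he4' : Real.exp (4 * l₂) ≤ Real.exp 4 :=
                Real.exp_le_exp.2 (by linarith)
              have he0 : (0:ℝ) ≤ Real.exp l₂ := (Real.exp_pos _).le
              have he0' : (0:ℝ) ≤ Real.exp (4 * l₂) := (Real.exp_pos _).le
              refine add_le_add ?_ ?_
              · calc ENNReal.ofReal (2 * (a ^ 2 * poissonPmf l₁ x)) *
                    ENNReal.ofReal (l₂ * Real.exp l₂)
                    = ENNReal.ofReal (2 * (a ^ 2 * poissonPmf l₁ x) * (l₂ * Real.exp l₂)) :=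
                      (ENNReal.ofReal_mul (by positivity)).symm
                  _ ≤ ENNReal.ofReal (a ^ 2 * poissonPmf l₁ x * (l₂ * (2 * Real.exp 4))) := by
                      refine ENNReal.ofReal_le_ofReal ?_
                      nlinarith [mul_le_mul_of_nonneg_left he4
                        (by positivity : (0:ℝ) ≤ 2 * (a ^ 2 * poissonPmf l₁ x) * l₂)]
                  _ = ENNReal.ofReal (a ^ 2 * poissonPmf l₁ x) *
                      (ENNReal.ofReal l₂ * ENNReal.ofReal (2 * Real.exp 4)) := by
                      rw [ENNReal.ofReal_mul hsa, ENNReal.ofReal_mul hl₂']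
              · calc ENNReal.ofReal (2 * poissonPmf l₁ x) *
                    ENNReal.ofReal (4 * l₂ * Real.exp (4 * l₂))
                    = ENNReal.ofReal (2 * poissonPmf l₁ x * (4 * l₂ * Real.exp (4 * l₂))) :=
                      (ENNReal.ofReal_mul (by positivity)).symm
                  _ ≤ ENNReal.ofReal (poissonPmf l₁ x * (l₂ * (8 * Real.exp 4))) := by
                      refine ENNReal.ofReal_le_ofReal ?_
                      nlinarith [mul_le_mul_of_nonneg_left he4'
                        (by positivity : (0:ℝ) ≤ 8 * poissonPmf l₁ x * l₂)]
                  _ = ENNReal.ofReal (poissonPmf l₁ x) *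
                      (ENNReal.ofReal l₂ * ENNReal.ofReal (8 * Real.exp 4)) := by
                      rw [ENNReal.ofReal_mul hpx, ENNReal.ofReal_mul hl₂']
      have hB2 : (∑' x : ℕ, ∑' y : ℕ, F x (y + 1)) ≤ ENNReal.ofReal l₂ * K := by
        calc (∑' x : ℕ, ∑' y : ℕ, F x (y + 1))
            ≤ ∑' x : ℕ,
              (ENNReal.ofReal ((V x - (if A < (x:ℝ) then (1:ℝ) else 0) * l₁) ^ 2 *
                  poissonPmf l₁ x) *
                (ENNReal.ofReal l₂ * ENNReal.ofReal (2 * Real.exp 4)) +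
              ENNReal.ofReal (poissonPmf l₁ x) *
                (ENNReal.ofReal l₂ * ENNReal.ofReal (8 * Real.exp 4))) :=
              ENNReal.tsum_le_tsum hB
          _ = R₁ * (ENNReal.ofReal l₂ * ENNReal.ofReal (2 * Real.exp 4)) +
              (∑' x : ℕ, ENNReal.ofReal (poissonPmf l₁ x)) *
                (ENNReal.ofReal l₂ * ENNReal.ofReal (8 * Real.exp 4)) := by
              rw [ENNReal.tsum_add, ENNReal.tsum_mul_right, ENNReal.tsum_mul_right,
                hR₁def, sqRisk1]
          _ ≤ R₁ * (ENNReal.ofReal l₂ * ENNReal.ofReal (2 * Real.exp 4)) +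
              1 * (ENNReal.ofReal l₂ * ENNReal.ofReal (8 * Real.exp 4)) := by
              exact add_le_add le_rfl
                (mul_le_mul_left (tsum_ofReal_poissonPmf_le_one hl₁') _)
          _ = ENNReal.ofReal l₂ * K := by rw [hKdef, mul_add, one_mul]; ring
      calc sqRisk2 A l₁ l₂ (fun p => V p.1 + V p.2)
          = (∑' x : ℕ, F x 0) + ∑' x : ℕ, ∑' y : ℕ, F x (y + 1) := hsplit
        _ ≤ R₁ + ENNReal.ofReal l₂ * K := add_le_add hA1 hB2
    calc ENNReal.ofReal (Real.exp (-l₂)) * R₀ ≤ sqRisk2 A l₁ l₂ δstar := step1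
      _ ≤ sqRisk2 A l₁ l₂ (fun p => V p.1 + V p.2) := hdom l₁ l₂ hl₁ h0
      _ ≤ R₁ + ENNReal.ofReal l₂ * K := step3
  -- Endgame
  have hR₀top : R₀ ≠ ⊤ := by
    intro h
    have h1 := key 1 one_pos le_rfl
    rw [h, ENNReal.mul_top (by simp [Real.exp_pos])] at h1
    exact (ENNReal.add_ne_top.2 ⟨hR₁top, ENNReal.mul_ne_top ENNReal.ofReal_ne_top hKtop⟩)
      (top_le_iff.1 h1)
  have hreal : ∀ l₂ ∈ Set.Ioc (0:ℝ) 1,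
      Real.exp (-l₂) * R₀.toReal - l₂ * K.toReal ≤ R₁.toReal := by
    intro l₂ hl₂
    have h := key l₂ hl₂.1 hl₂.2
    have hne : R₁ + ENNReal.ofReal l₂ * K ≠ ⊤ :=
      ENNReal.add_ne_top.2 ⟨hR₁top, ENNReal.mul_ne_top ENNReal.ofReal_ne_top hKtop⟩
    have h2 := ENNReal.toReal_mono hne h
    rw [ENNReal.toReal_mul, ENNReal.toReal_ofReal (Real.exp_pos _).le,
      ENNReal.toReal_add hR₁top (ENNReal.mul_ne_top ENNReal.ofReal_ne_top hKtop),
      ENNReal.toReal_mul, ENNReal.toReal_ofReal hl₂.1.le] at h2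
    linarith
  have htends : Filter.Tendsto (fun t : ℝ => Real.exp (-t) * R₀.toReal - t * K.toReal)
      (nhdsWithin 0 (Set.Ioi 0)) (nhds R₀.toReal) := by
    have hc : Continuous (fun t : ℝ => Real.exp (-t) * R₀.toReal - t * K.toReal) := by
      continuity
    have := hc.tendsto 0
    simp only [neg_zero, Real.exp_zero, one_mul, zero_mul, sub_zero] at this
    exact this.mono_left nhdsWithin_le_nhds
  have hev : ∀ᶠ t in nhdsWithin 0 (Set.Ioi 0),
      Real.exp (-t) * R₀.toReal - t * K.toReal ≤ R₁.toReal := by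
    filter_upwards [Ioc_mem_nhdsGT_of_mem ⟨le_refl (0:ℝ), zero_lt_one⟩] with t ht
    exact hreal t ht
  have hfin : R₀.toReal ≤ R₁.toReal := le_of_tendsto htends hev
  exact (ENNReal.toReal_le_toReal hR₀top hR₁top).1 hfin
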